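/- Let A be a Metzler matrix and J a nonnegative matrix, both n×n, and let T̄ > 0. Suppose there exists λ ∈ ℝ^n with all entries strictly positive such that λᵀA < 0 (componentwise) and λᵀ(J·exp(A·T̄)) < λᵀ (componentwise). Then for every θ ≥ T̄, λᵀ(J·exp(A·θ)) < λᵀ componentwise. -/

import Mathlib

open Matrix NormedSpace

section Aux

variable {n : ℕ}

private lemma pow_entry_nonneg {B : Matrix (Fin n) (Fin n) ℝ} (hB : ∀ i j, 0 ≤ B i j) :
    ∀ (k : ℕ) (i j : Fin n), 0 ≤ (B ^ k) i j := by
  intro k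
  induction k with
  | zero => intro i j; simp [Matrix.one_apply]; positivity
  | succ m ih =>
      intro i j
      rw [pow_succ, Matrix.mul_apply]
      exact Finset.sum_nonneg fun x _ => mul_nonneg (ih i x) (hB x j)

private lemma exp_entry_hasSum (B : Matrix (Fin n) (Fin n) ℝ) (i j : Fin n) :
    HasSum (fun k : ℕ => ((Nat.factorial k : ℝ)⁻¹ • B ^ k) i j) (exp B i j) := by
  letI : SeminormedRing (Matrix (Fin n) (Fin n) ℝ) := Matrix.linftyOpSemiNormedRing
  letI : NormedRing (Matrix (Fin n) (Fin n) ℝ) := Matrix.linftyOpNormedRing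
  letI : NormedAlgebra ℝ (Matrix (Fin n) (Fin n) ℝ) := Matrix.linftyOpNormedAlgebra
  have h := exp_series_hasSum_exp' (𝕂 := ℝ) B
  have h2 := ((ContinuousLinearMap.proj (R := ℝ) (φ := fun _ : Fin n => Fin n → ℝ) i)).hasSum h
  exact ((ContinuousLinearMap.proj (R := ℝ) (φ := fun _ : Fin n => ℝ) j)).hasSum h2

private lemma exp_entry_nonneg {B : Matrix (Fin n) (Fin n) ℝ} (hB : ∀ i j, 0 ≤ B i j)
    (i j : Fin n) : 0 ≤ exp B i j :=
  hasSum_le (fun k => by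
      simp only [Matrix.smul_apply, smul_eq_mul]
      exact mul_nonneg (by positivity) (pow_entry_nonneg hB k i j))
    hasSum_zero (exp_entry_hasSum B i j) |>.trans_eq rfl

private lemma exp_diag_ge_one {B : Matrix (Fin n) (Fin n) ℝ} (hB : ∀ i j, 0 ≤ B i j)
    (j : Fin n) : 1 ≤ exp B j j := by
  have h := le_hasSum (exp_entry_hasSum B j j) 0 (fun k _ => by
    simp only [Matrix.smul_apply, smul_eq_mul]
    exact mul_nonneg (by positivity) (pow_entry_nonneg hB k j j))
  simpa [Matrix.one_apply] using h

/-- `exp (r • 1) = Real.exp r • 1` for matrices. -/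
private lemma exp_smul_one (r : ℝ) :
    exp (r • (1 : Matrix (Fin n) (Fin n) ℝ)) = Real.exp r • 1 := by
  letI : SeminormedRing (Matrix (Fin n) (Fin n) ℝ) := Matrix.linftyOpSemiNormedRing
  letI : NormedRing (Matrix (Fin n) (Fin n) ℝ) := Matrix.linftyOpNormedRing
  letI : NormedAlgebra ℝ (Matrix (Fin n) (Fin n) ℝ) := Matrix.linftyOpNormedAlgebra
  have : r • (1 : Matrix (Fin n) (Fin n) ℝ) = algebraMap ℝ _ r := by
    rw [Algebra.algebraMap_eq_smul_one]
  rw [this]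
  have h := algebraMap_exp_comm (𝕂 := ℝ) (𝔸 := Matrix (Fin n) (Fin n) ℝ) r
  rw [← Real.exp_eq_exp_ℝ, Algebra.algebraMap_eq_smul_one (Real.exp r)] at h
  exact h.symm

end Aux

section Metzler

variable {n : ℕ} {A : Matrix (Fin n) (Fin n) ℝ}

/-- entries of `exp (s • A)` for Metzler `A`, `s ≥ 0`: nonneg, with positive diagonal. -/
private lemma metzler_exp_entries (hA : ∀ i j, i ≠ j → 0 ≤ A i j) {s : ℝ} (hs : 0 ≤ s) :
    (∀ i j, 0 ≤ exp (s • A) i j) ∧ (∀ j, 0 < exp (s • A) j j) := by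
  set c : ℝ := ∑ i, |A i i| with hc
  have hc0 : ∀ i, 0 ≤ A i i + c := by
    intro i
    have h1 : -A i i ≤ |A i i| := neg_le_abs _
    have h2 : |A i i| ≤ c := Finset.single_le_sum (f := fun i => |A i i|)
      (fun i _ => abs_nonneg _) (Finset.mem_univ i)
    linarith
  set B : Matrix (Fin n) (Fin n) ℝ := s • A + (s * c) • (1 : Matrix (Fin n) (Fin n) ℝ) with hB
  have hBnn : ∀ i j, 0 ≤ B i j := by
    intro i j
    by_cases h : i = j
    · subst h
      simp only [hB, Matrix.add_apply, Matrix.smul_apply, Matrix.one_apply_eq, smul_eq_mul,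
        mul_one]
      have := hc0 i
      nlinarith
    · simp only [hB, Matrix.add_apply, Matrix.smul_apply, Matrix.one_apply_ne h, smul_eq_mul,
        mul_zero, add_zero]
      exact mul_nonneg hs (hA i j h)
  have hsplit : s • A = B + (-(s * c)) • (1 : Matrix (Fin n) (Fin n) ℝ) := by
    simp [hB]
  have hcomm : Commute B ((-(s * c)) • (1 : Matrix (Fin n) (Fin n) ℝ)) := by
    simpa using (Commute.one_right B).smul_right (-(s * c))
  have hexp : exp (s • A) = Real.exp (-(s * c)) • exp B := by
    rw [hsplit, Matrix.exp_add_of_commute B _ hcomm, exp_smul_one]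
    rw [mul_smul_comm, mul_one]
  constructor
  · intro i j
    rw [hexp]
    simp only [Matrix.smul_apply, smul_eq_mul]
    exact mul_nonneg (Real.exp_nonneg _) (exp_entry_nonneg hBnn i j)
  · intro j
    rw [hexp]
    simp only [Matrix.smul_apply, smul_eq_mul]
    exact mul_pos (Real.exp_pos _) (lt_of_lt_of_le one_pos (exp_diag_ge_one hBnn j))

/-- `lᵀ exp(s•A) ≤ lᵀ` for `s ≥ 0` when `lᵀ A < 0`. -/
private lemma vecMul_exp_le (hA : ∀ i j, i ≠ j → 0 ≤ A i j)
    (l : Fin n → ℝ) (hflow : ∀ j, Matrix.vecMul l A j < 0) {s : ℝ} (hs : 0 ≤ s) (j : Fin n) :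
    Matrix.vecMul l (exp (s • A)) j ≤ l j := by
  -- the coordinate function
  set f : ℝ → ℝ := fun t => Matrix.vecMul l (exp (t • A)) j with hf
  have hderiv : ∀ t : ℝ, HasDerivAt f (Matrix.vecMul l (A * exp (t • A)) j) t := by
    intro t
    letI : SeminormedRing (Matrix (Fin n) (Fin n) ℝ) := Matrix.linftyOpSemiNormedRing
    letI : NormedRing (Matrix (Fin n) (Fin n) ℝ) := Matrix.linftyOpNormedRing
    letI : NormedAlgebra ℝ (Matrix (Fin n) (Fin n) ℝ) := Matrix.linftyOpNormedAlgebra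
    have h := hasDerivAt_exp_smul_const' (𝕂 := ℝ) A t
    -- linear map M ↦ vecMul l M j
    let L : Matrix (Fin n) (Fin n) ℝ →ₗ[ℝ] ℝ :=
      { toFun := fun M => Matrix.vecMul l M j
        map_add' := by
          intro M N
          simp [Matrix.vecMul, dotProduct, Finset.sum_add_distrib, mul_add]
        map_smul' := by
          intro c M
          simp [Matrix.vecMul, dotProduct, Finset.mul_sum, mul_left_comm] }
    have hL : Continuous L := LinearMap.continuous_of_finiteDimensional L
    exact (⟨L, hL⟩ : Matrix (Fin n) (Fin n) ℝ →L[ℝ] ℝ).hasFDerivAt.comp_hasDerivAt t h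
  have hanti : AntitoneOn f (Set.Ici (0 : ℝ)) := by
    apply antitoneOn_of_deriv_nonpos (convex_Ici 0)
    · exact fun x _ => (hderiv x).continuousAt.continuousWithinAt
    · exact fun x _ => (hderiv x).differentiableAt.differentiableWithinAt
    · intro x hx
      rw [interior_Ici] at hx
      rw [(hderiv x).deriv]
      have hxnn : (0 : ℝ) ≤ x := le_of_lt hx
      have hE := (metzler_exp_entries hA hxnn).1
      rw [← Matrix.vecMul_vecMul]
      rw [Matrix.vecMul]
      apply Finset.sum_nonpos ?_ |>.trans_eq rfl
      intro k _
      exact mul_nonpos_of_nonpos_of_nonneg (le_of_lt (hflow k)) (hE k j)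
  have h0 : f 0 = l j := by
    simp [hf, zero_smul, exp_zero]
  calc f s ≤ f 0 := hanti Set.self_mem_Ici hs hs
    _ = l j := h0

end Metzler

/-- Minimum dwell-time key implication: if `lᵀA < 0` and `lᵀ J exp(A T̄) < lᵀ` componentwise,
then `lᵀ J exp(A θ) < lᵀ` componentwise for every `θ ≥ T̄`. -/
theorem minimum_dwell_time (n : ℕ) (A J : Matrix (Fin n) (Fin n) ℝ)
    (hA : ∀ i j, i ≠ j → 0 ≤ A i j) (hJ : ∀ i j, 0 ≤ J i j)
    (T : ℝ) (hT : 0 < T)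
    (l : Fin n → ℝ) (hl : ∀ i, 0 < l i)
    (hflow : ∀ j, Matrix.vecMul l A j < 0)
    (hjump : ∀ j, Matrix.vecMul l (J * NormedSpace.exp (T • A)) j < l j) :
    ∀ θ : ℝ, T ≤ θ → ∀ j, Matrix.vecMul l (J * NormedSpace.exp (θ • A)) j < l j := by
  intro θ hθ j
  set s : ℝ := θ - T with hsdef
  have hs : 0 ≤ s := by linarith
  have hsplit : θ • A = T • A + s • A := by
    rw [← add_smul]; congr 1; simp [hsdef]
  have hcomm : Commute (T • A) (s • A) :=
    ((Commute.refl A).smul_left T).smul_right s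
  have hexp : exp (θ • A) = exp (T • A) * exp (s • A) := by
    rw [hsplit, Matrix.exp_add_of_commute _ _ hcomm]
  set E := exp (s • A) with hE
  have hEnn := (metzler_exp_entries hA hs).1
  have hEdiag := (metzler_exp_entries hA hs).2
  set v : Fin n → ℝ := Matrix.vecMul l (J * exp (T • A)) with hv
  have hgoal : Matrix.vecMul l (J * exp (θ • A)) j = Matrix.vecMul v E j := by
    rw [hexp, ← Matrix.mul_assoc, hv, Matrix.vecMul_vecMul]
  rw [hgoal]
  -- v is nonneg
  have hvnn : ∀ k, 0 ≤ v k := by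
    intro k
    rw [hv, ← Matrix.vecMul_vecMul]
    rw [Matrix.vecMul]
    apply Finset.sum_nonneg
    intro i _
    apply mul_nonneg
    · rw [Matrix.vecMul]
      exact Finset.sum_nonneg fun x _ => mul_nonneg (hl x).le (hJ x i)
    · exact (metzler_exp_entries hA hT.le).1 i k
  have hvlt : ∀ k, v k < l k := hjump
  have h1 : Matrix.vecMul v E j < Matrix.vecMul l E j := by
    rw [Matrix.vecMul, Matrix.vecMul]
    apply Finset.sum_lt_sum
    · intro k _
      exact mul_le_mul_of_nonneg_right (hvlt k).le (hEnn k j)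
    · exact ⟨j, Finset.mem_univ j, mul_lt_mul_of_pos_right (hvlt j) (hEdiag j)⟩
  have h2 : Matrix.vecMul l E j ≤ l j := vecMul_exp_le hA l hflow hs j
  linarith
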